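/- arXiv:2407.04942 — 3 statements merged into one kernel-verified Lean document; each statement's English description precedes it below -/
import Mathlib

section
/- Let X be a random variable taking finitely many values. Then for τ ∈ (0,1), the τ-expectile e_τ(X) satisfies min X ≤ e_τ(X) ≤ max X, and as τ → 1⁻, e_τ(X) → max X. -/
open Filter Topology

/-- An expectile lies between the minimum and maximum values, and tends to the
maximum as τ → 1⁻. -/
theorem expectile_bounds_and_limit (n : ℕ)
    (hne : (Finset.univ : Finset (Fin n)).Nonempty)
    (x p : Fin n → ℝ) (hp : ∀ i, 0 < p i) (hps : ∑ i, p i = 1)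
    (e : ℝ → ℝ)
    -- first-order condition defining the τ-expectile:
    (hfoc : ∀ τ, 0 < τ → τ < 1 →
      τ * (∑ i, p i * max (x i - e τ) 0) = (1 - τ) * (∑ i, p i * max (e τ - x i) 0)) :
    (∀ τ, 0 < τ → τ < 1 →
      Finset.univ.inf' hne x ≤ e τ ∧ e τ ≤ Finset.univ.sup' hne x) ∧
    Tendsto e (nhdsWithin 1 (Set.Iio 1)) (nhds (Finset.univ.sup' hne x)) := by
  set m := Finset.univ.inf' hne x with hm
  set M := Finset.univ.sup' hne x with hM
  have hmM : m ≤ M := by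
    obtain ⟨i, -⟩ := hne
    exact le_trans (Finset.inf'_le x (Finset.mem_univ i)) (Finset.le_sup' x (Finset.mem_univ i))
  have hbounds : ∀ τ, 0 < τ → τ < 1 → m ≤ e τ ∧ e τ ≤ M := by
    intro τ hτ0 hτ1
    have h := hfoc τ hτ0 hτ1
    constructor
    · by_contra hlt
      push_neg at hlt
      have hR : (∑ i, p i * max (e τ - x i) 0) = 0 := by
        apply Finset.sum_eq_zero
        intro i _
        have hi : m ≤ x i := Finset.inf'_le x (Finset.mem_univ i)
        have : e τ - x i ≤ 0 := by linarith
        simp [max_eq_right this]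
      have hL : 0 < ∑ i, p i * max (x i - e τ) 0 := by
        apply Finset.sum_pos _ hne
        intro i _
        have hi : m ≤ x i := Finset.inf'_le x (Finset.mem_univ i)
        have hx : 0 < x i - e τ := by linarith
        rw [max_eq_left hx.le]
        exact mul_pos (hp i) hx
      rw [hR, mul_zero] at h
      nlinarith
    · by_contra hlt
      push_neg at hlt
      have hL : (∑ i, p i * max (x i - e τ) 0) = 0 := by
        apply Finset.sum_eq_zero
        intro i _
        have hi : x i ≤ M := Finset.le_sup' x (Finset.mem_univ i)
        have : x i - e τ ≤ 0 := by linarith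
        simp [max_eq_right this]
      have hR : 0 < ∑ i, p i * max (e τ - x i) 0 := by
        apply Finset.sum_pos _ hne
        intro i _
        have hi : x i ≤ M := Finset.le_sup' x (Finset.mem_univ i)
        have hx : 0 < e τ - x i := by linarith
        rw [max_eq_left hx.le]
        exact mul_pos (hp i) hx
      rw [hL, mul_zero] at h
      nlinarith
  refine ⟨hbounds, ?_⟩
  obtain ⟨j, -, hj⟩ := Finset.exists_mem_eq_sup' hne x
  have hpj : 0 < p j := hp j
  -- squeeze
  have hlow : Tendsto (fun τ : ℝ => M - (1 - τ) * (2 * (M - m)) / p j)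
      (nhdsWithin 1 (Set.Iio 1)) (nhds M) := by
    have hc : Tendsto (fun τ : ℝ => M - (1 - τ) * (2 * (M - m)) / p j) (nhds 1)
        (nhds (M - (1 - 1) * (2 * (M - m)) / p j)) := by
      apply Continuous.tendsto
      fun_prop
    simpa using hc.mono_left nhdsWithin_le_nhds
  have hhigh : Tendsto (fun _ : ℝ => M) (nhdsWithin 1 (Set.Iio 1)) (nhds M) :=
    tendsto_const_nhds
  apply tendsto_of_tendsto_of_tendsto_of_le_of_le' hlow hhigh
  · have h1 : ∀ᶠ τ : ℝ in nhdsWithin 1 (Set.Iio 1), (1/2 : ℝ) < τ :=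
      eventually_nhdsWithin_of_eventually_nhds (eventually_gt_nhds (by norm_num))
    have h2 : ∀ᶠ τ : ℝ in nhdsWithin 1 (Set.Iio 1), τ < 1 :=
      eventually_mem_nhdsWithin
    filter_upwards [h1, h2] with τ hτh hτ1
    have hτ0 : (0:ℝ) < τ := by linarith
    obtain ⟨hle, hge⟩ := hbounds τ hτ0 hτ1
    have h := hfoc τ hτ0 hτ1
    -- lower bound for the positive-part sum
    have hS1 : p j * (M - e τ) ≤ ∑ i, p i * max (x i - e τ) 0 := by
      have := Finset.single_le_sum (f := fun i => p i * max (x i - e τ) 0)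
        (fun i _ => mul_nonneg (hp i).le (le_max_right _ _)) (Finset.mem_univ j)
      have hxj : M = x j := hM.trans hj
      calc p j * (M - e τ) = p j * max (x j - e τ) 0 := by
            rw [← hxj, max_eq_left (by linarith)]
        _ ≤ _ := this
    -- upper bound for the negative-part sum
    have hS2 : (∑ i, p i * max (e τ - x i) 0) ≤ M - m := by
      calc (∑ i, p i * max (e τ - x i) 0) ≤ ∑ i, p i * (M - m) := by
            apply Finset.sum_le_sum
            intro i _
            have hi : m ≤ x i := Finset.inf'_le x (Finset.mem_univ i)
            have : max (e τ - x i) 0 ≤ M - m := by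
              apply max_le (by linarith) (by linarith)
            exact mul_le_mul_of_nonneg_left this (hp i).le
        _ = M - m := by rw [← Finset.sum_mul, hps, one_mul]
    have key : τ * (p j * (M - e τ)) ≤ (1 - τ) * (M - m) := by
      calc τ * (p j * (M - e τ)) ≤ τ * ∑ i, p i * max (x i - e τ) 0 :=
            mul_le_mul_of_nonneg_left hS1 hτ0.le
        _ = (1 - τ) * (∑ i, p i * max (e τ - x i) 0) := h
        _ ≤ (1 - τ) * (M - m) := mul_le_mul_of_nonneg_left hS2 (by linarith)
    have hkey2 : (M - e τ) * p j ≤ (1 - τ) * (2 * (M - m)) := by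
      nlinarith [mul_nonneg (by linarith : (0:ℝ) ≤ 2 * τ - 1)
        (mul_nonneg hpj.le (by linarith : (0:ℝ) ≤ M - e τ))]
    have := (le_div_iff₀ hpj).mpr hkey2
    linarith
  · have h1 : ∀ᶠ τ : ℝ in nhdsWithin 1 (Set.Iio 1), τ < 1 := eventually_mem_nhdsWithin
    have h0 : ∀ᶠ τ : ℝ in nhdsWithin 1 (Set.Iio 1), (0:ℝ) < τ :=
      eventually_nhdsWithin_of_eventually_nhds (eventually_gt_nhds (by norm_num))
    filter_upwards [h0, h1] with τ hτ0 hτ1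
    exact (hbounds τ hτ0 hτ1).2
end

section
/- Let γ_u ∈ (0,1) and consider the reachability estimation recursion u(s_t) = max(1_{s_t ∈ S_f^c}, γ_u · u(s_{t+1})) along an infinite state trajectory, where S_f^c denotes the unsafe (infeasible) set. If the trajectory never enters the unsafe set, then the unique bounded solution satisfies u(s_t) = 0 for all t; if the trajectory enters the unsafe set first at time t+k (k ≥ 0), then u(s_t) = γ_u^k. -/
/-- Reachability estimation along a trajectory: the bounded solution of
u_t = max(c_t, γ u_{t+1}) vanishes on trajectories that never become unsafe,
and equals γ^k when unsafety first occurs k steps ahead. -/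
theorem reachability_estimation_values (γ : ℝ) (hγ0 : 0 < γ) (hγ1 : γ < 1)
    (c u : ℕ → ℝ) (hc : ∀ t, c t = 0 ∨ c t = 1)
    (hrec : ∀ t, u t = max (c t) (γ * u (t + 1)))
    (hbdd : ∀ t, 0 ≤ u t ∧ u t ≤ 1) :
    ((∀ t, c t = 0) → ∀ t, u t = 0) ∧
    (∀ t k, (∀ j, j < k → c (t + j) = 0) → c (t + k) = 1 → u t = γ ^ k) := by
  constructor
  · intro h0 t
    have key : ∀ n, u t = γ ^ n * u (t + n) := by
      intro n
      induction n with
      | zero => simp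
      | succ n ih =>
        rw [ih]
        have h := hrec (t + n)
        rw [h0 (t + n), max_eq_right (by
          have := (hbdd (t + n + 1)).1; positivity)] at h
        rw [h, ← add_assoc]; ring
    have hle : ∀ n, u t ≤ γ ^ n := by
      intro n
      rw [key n]
      calc γ ^ n * u (t + n) ≤ γ ^ n * 1 :=
            mul_le_mul_of_nonneg_left (hbdd _).2 (by positivity)
        _ = γ ^ n := mul_one _
    have h1 : Filter.Tendsto (fun n => γ ^ n) Filter.atTop (nhds 0) :=
      tendsto_pow_atTop_nhds_zero_of_lt_one hγ0.le hγ1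
    have h2 : u t ≤ 0 := ge_of_tendsto h1 (Filter.Eventually.of_forall hle)
    exact le_antisymm h2 (hbdd t).1
  · intro t k
    induction k generalizing t with
    | zero =>
      intro _ h1
      simp only [Nat.add_zero] at h1
      have := hrec t
      rw [h1, max_eq_left] at this
      · simpa using this
      · calc γ * u (t + 1) ≤ γ * 1 := mul_le_mul_of_nonneg_left (hbdd _).2 hγ0.le
          _ ≤ 1 := by linarith
    | succ k ih =>
      intro hj h1
      have hc0 : c t = 0 := hj 0 (Nat.succ_pos k)
      have hu1 : u (t + 1) = γ ^ k := by
        apply ih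
        · intro j hjk
          have := hj (j + 1) (by omega)
          simpa [add_assoc, add_comm 1 j] using this
        · have := h1
          rwa [show t + (k + 1) = t + 1 + k by ring] at this
      have := hrec t
      rw [hc0, hu1, max_eq_right (by positivity)] at this
      rw [this]; ring
end

section
/- For probability distributions over a finite action set and a strictly positive base policy π_b, among all policies π with D_KL(π‖π_b) ≤ ε, the exponential-family policy π_λ(a) ∝ π_b(a)exp(A(a)/λ) with λ chosen so that D_KL(π_λ‖π_b) = ε achieves E_{a∼π}[A(a)] at least as large as any π satisfying the constraint, provided A is not constant. -/
/-- Optimality of the exponentially tilted policy for the KL-constrained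
advantage maximization problem. -/
theorem tilted_policy_optimal {A : Type*} [Fintype A] [Nonempty A]
    (Adv : A → ℝ) (hAdv : ∃ a a', Adv a ≠ Adv a')
    (πb : A → ℝ) (hπb : ∀ a, 0 < πb a) (hπbs : ∑ a, πb a = 1)
    (ε : ℝ) (hε : 0 < ε)
    (lam : ℝ) (hlam : 0 < lam)
    (Z : ℝ) (hZ : Z = ∑ a, πb a * Real.exp (Adv a / lam))
    (πl : A → ℝ) (hπl : ∀ a, πl a = πb a * Real.exp (Adv a / lam) / Z)
    (hKLl : ∑ a, πl a * Real.log (πl a / πb a) = ε) :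
    ∀ π : A → ℝ, (∀ a, 0 ≤ π a) → ∑ a, π a = 1 →
      (∑ a, π a * Real.log (π a / πb a)) ≤ ε →
      ∑ a, π a * Adv a ≤ ∑ a, πl a * Adv a := by
  intro π hπ hπs hKL
  have hZ0 : 0 < Z := by
    rw [hZ]
    exact Finset.sum_pos (fun a _ => mul_pos (hπb a) (Real.exp_pos _)) Finset.univ_nonempty
  have hπl0 : ∀ a, 0 < πl a := fun a => by
    rw [hπl]; exact div_pos (mul_pos (hπb a) (Real.exp_pos _)) hZ0
  have hπls : ∑ a, πl a = 1 := by
    simp only [hπl]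
    rw [← Finset.sum_div, ← hZ, div_self hZ0.ne']
  have hlogπl : ∀ a, Real.log (πl a) = Real.log (πb a) + Adv a / lam - Real.log Z := by
    intro a
    rw [hπl a, Real.log_div (mul_pos (hπb a) (Real.exp_pos _)).ne' hZ0.ne',
      Real.log_mul (hπb a).ne' (Real.exp_pos _).ne', Real.log_exp]
  -- key identity
  have key : ∀ (p : A → ℝ), (∀ a, 0 ≤ p a) → ∑ a, p a = 1 →
      ∑ a, p a * Adv a =
        lam * ((∑ a, p a * Real.log (p a / πb a)) - (∑ a, p a * Real.log (p a / πl a)))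
          + lam * Real.log Z := by
    intro p hp hps
    have hterm : ∀ a, p a * Adv a =
        lam * (p a * Real.log (p a / πb a) - p a * Real.log (p a / πl a))
          + lam * (p a * Real.log Z) := by
      intro a
      rcases eq_or_lt_of_le (hp a) with h | h
      · simp [← h]
      · rw [Real.log_div h.ne' (hπb a).ne', Real.log_div h.ne' (hπl0 a).ne', hlogπl a]
        field_simp
        ring
    calc ∑ a, p a * Adv a
        = ∑ a, (lam * (p a * Real.log (p a / πb a) - p a * Real.log (p a / πl a))
            + lam * (p a * Real.log Z)) := Finset.sum_congr rfl (fun a _ => hterm a)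
      _ = lam * ((∑ a, p a * Real.log (p a / πb a)) - (∑ a, p a * Real.log (p a / πl a)))
            + lam * Real.log Z := by
          rw [Finset.sum_add_distrib, ← Finset.mul_sum, ← Finset.mul_sum,
            Finset.sum_sub_distrib, ← Finset.sum_mul, hps, one_mul]
  -- Gibbs inequality
  have gibbs : ∀ (p : A → ℝ), (∀ a, 0 ≤ p a) → ∑ a, p a = 1 →
      0 ≤ ∑ a, p a * Real.log (p a / πl a) := by
    intro p hp hps
    have h1 : ∑ a, p a * Real.log (πl a / p a) ≤ ∑ a, (πl a - p a) := by
      apply Finset.sum_le_sum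
      intro a _
      rcases eq_or_lt_of_le (hp a) with h | h
      · simp [← h, (hπl0 a).le]
      · have hlog : Real.log (πl a / p a) ≤ πl a / p a - 1 :=
          Real.log_le_sub_one_of_pos (div_pos (hπl0 a) h)
        have := mul_le_mul_of_nonneg_left hlog h.le
        calc p a * Real.log (πl a / p a) ≤ p a * (πl a / p a - 1) := this
          _ = πl a - p a := by field_simp
    rw [Finset.sum_sub_distrib, hπls, hps, sub_self] at h1
    have h2 : ∑ a, p a * Real.log (p a / πl a) = -∑ a, p a * Real.log (πl a / p a) := by
      rw [← Finset.sum_neg_distrib]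
      apply Finset.sum_congr rfl
      intro a _
      rcases eq_or_lt_of_le (hp a) with h | h
      · simp [← h]
      · rw [Real.log_div h.ne' (hπl0 a).ne', Real.log_div (hπl0 a).ne' h.ne']
        ring
    rw [h2]
    linarith
  have hKLself : ∑ a, πl a * Real.log (πl a / πl a) = 0 := by
    apply Finset.sum_eq_zero
    intro a _
    rw [div_self (hπl0 a).ne', Real.log_one, mul_zero]
  have hEπl : ∑ a, πl a * Adv a = lam * ε + lam * Real.log Z := by
    rw [key πl (fun a => (hπl0 a).le) hπls, hKLl, hKLself, sub_zero]
  have hEπ := key π hπ hπs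
  have hg := gibbs π hπ hπs
  rw [hEπ, hEπl]
  have : (∑ a, π a * Real.log (π a / πb a)) - (∑ a, π a * Real.log (π a / πl a)) ≤ ε := by
    linarith
  nlinarith
end
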